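/- Let D_n be random variables on ℕ with D_n → D in distribution and sup_n E[A^{D_n}] < ∞ for every A > 1, and fix k ≥ 2. Define h_n(p) := E[f(D_n; p)] and h(p) := E[f(D; p)], where f(l; p) := ∑_{r=k}^l r·C(l,r)p^r(1−p)^{l−r}. Then h_n → h uniformly on [0,1], and for every j ≥ 1, the j-th derivatives satisfy d^j h_n/dp^j → d^j h/dp^j uniformly on [0,1]. -/

import Mathlib

open Filter Topology

noncomputable def binomProb (l r : ℕ) (p : ℝ) : ℝ :=
  (l.choose r : ℝ) * p ^ r * (1 - p) ^ (l - r)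

/-- `f(l;p) = E[B·1{B ≥ k}]` for `B ~ Bin(l,p)`. -/
noncomputable def truncBinMean (k l : ℕ) (p : ℝ) : ℝ :=
  ∑ r ∈ Finset.Icc k l, (r : ℝ) * binomProb l r p

/-- `h(p) = E[f(D;p)]` where `D` has pmf `w`. -/
noncomputable def hFun (k : ℕ) (w : ℕ → ℝ) (p : ℝ) : ℝ :=
  ∑' l : ℕ, w l * truncBinMean k l p

lemma iterDeriv_const_mul'' {f : ℝ → ℝ} (hf : ContDiff ℝ (⊤ : ℕ∞) f) (c : ℝ) (n : ℕ) :
    iteratedDeriv n (fun x => c * f x) = fun x => c * iteratedDeriv n f x := by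
  funext x
  rw [← iteratedDerivWithin_univ, ← iteratedDerivWithin_univ]
  exact iteratedDerivWithin_const_mul (Set.mem_univ x) uniqueDiffOn_univ c
    ((hf.of_le (by exact_mod_cast le_top)).contDiffWithinAt)

lemma contDiff_pow' (a : ℕ) : ContDiff ℝ (⊤ : ℕ∞) (fun x : ℝ => x ^ a) :=
  contDiff_id.pow a

lemma contDiff_one_sub_pow (a : ℕ) : ContDiff ℝ (⊤ : ℕ∞) (fun x : ℝ => (1 - x) ^ a) :=
  (contDiff_const.sub contDiff_id).pow a

lemma contDiff_binomProb (l r : ℕ) : ContDiff ℝ (⊤ : ℕ∞) (binomProb l r) := by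
  unfold binomProb
  exact ((contDiff_const.mul (contDiff_pow' r)).mul (contDiff_one_sub_pow (l - r)))

lemma contDiff_truncBinMean (k l : ℕ) : ContDiff ℝ (⊤ : ℕ∞) (truncBinMean k l) := by
  unfold truncBinMean
  exact ContDiff.sum fun r _ => contDiff_const.mul (contDiff_binomProb l r)

lemma iterDeriv_pow (j a : ℕ) :
    iteratedDeriv j (fun x : ℝ => x ^ a) = fun x => (a.descFactorial j : ℝ) * x ^ (a - j) := by
  induction j with
  | zero => simp
  | succ j IH =>
    rw [iteratedDeriv_succ, IH]
    funext x
    rw [deriv_const_mul _ (differentiableAt_pow _), deriv_pow_field]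
    rw [Nat.descFactorial_succ, Nat.sub_sub]
    push_cast
    ring

lemma abs_iterDeriv_pow_le (j a : ℕ) {x : ℝ} (hx : |x| ≤ 2) :
    |iteratedDeriv j (fun x : ℝ => x ^ a) x| ≤ (a : ℝ) ^ j * 2 ^ a := by
  rw [iterDeriv_pow, abs_mul, abs_pow]
  have h1 : |(a.descFactorial j : ℝ)| ≤ (a : ℝ) ^ j := by
    rw [abs_of_nonneg (by positivity)]
    exact_mod_cast Nat.descFactorial_le_pow a j
  have h2 : |x| ^ (a - j) ≤ 2 ^ a :=
    le_trans (pow_le_pow_left₀ (abs_nonneg x) hx _)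
      (pow_le_pow_right₀ one_le_two (Nat.sub_le a j))
  exact mul_le_mul h1 h2 (by positivity) (by positivity)

lemma iterDeriv_one_sub_pow (j a : ℕ) :
    iteratedDeriv j (fun p : ℝ => (1 - p) ^ a)
      = fun x => (-1 : ℝ) ^ j * ((a.descFactorial j : ℝ) * (1 - x) ^ (a - j)) := by
  induction j with
  | zero => simp
  | succ j IH =>
    rw [iteratedDeriv_succ, IH]
    funext x
    have hd : HasDerivAt (fun x : ℝ => (-1 : ℝ) ^ j * ((a.descFactorial j : ℝ) * (1 - x) ^ (a - j)))
        ((-1 : ℝ) ^ j * ((a.descFactorial j : ℝ) * (((a - j : ℕ) : ℝ) * (1 - x) ^ (a - j - 1) * (-1)))) x :=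
      ((((hasDerivAt_id x).const_sub 1).pow _).const_mul _).const_mul _
    rw [hd.deriv, Nat.descFactorial_succ, Nat.sub_sub]
    push_cast
    ring

lemma abs_iterDeriv_one_sub_pow_le (j a : ℕ) {x : ℝ} (hx : |1 - x| ≤ 2) :
    |iteratedDeriv j (fun p : ℝ => (1 - p) ^ a) x| ≤ (a : ℝ) ^ j * 2 ^ a := by
  rw [iterDeriv_one_sub_pow]
  simp only [abs_mul, abs_pow, abs_neg, abs_one, one_pow, one_mul]
  have h1 : |(a.descFactorial j : ℝ)| ≤ (a : ℝ) ^ j := by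
    rw [abs_of_nonneg (by positivity)]
    exact_mod_cast Nat.descFactorial_le_pow a j
  have h2 : |1 - x| ^ (a - j) ≤ 2 ^ a :=
    le_trans (pow_le_pow_left₀ (abs_nonneg _) hx _)
      (pow_le_pow_right₀ one_le_two (Nat.sub_le a j))
  exact mul_le_mul h1 h2 (by positivity) (by positivity)

lemma abs_iterDeriv_binomProb_le (j l r : ℕ) (hr : r ≤ l) {p : ℝ}
    (hp : p ∈ Set.Icc (-1 : ℝ) 2) :
    |iteratedDeriv j (binomProb l r) p| ≤ (l.choose r : ℝ) * ((2 * l : ℝ) ^ j * 2 ^ l) := by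
  have hp2 : |p| ≤ 2 := abs_le.2 ⟨by linarith [hp.1], hp.2⟩
  have hq2 : |1 - p| ≤ 2 := abs_le.2 ⟨by linarith [hp.2], by linarith [hp.1]⟩
  have hf : ContDiff ℝ (⊤ : ℕ∞) (fun q : ℝ => (l.choose r : ℝ) * q ^ r) :=
    contDiff_const.mul (contDiff_pow' r)
  have hg := contDiff_one_sub_pow (l - r)
  have key : ‖iteratedFDeriv ℝ j (binomProb l r) p‖ ≤
      ∑ i ∈ Finset.range (j + 1), (j.choose i : ℝ) *
        ‖iteratedFDeriv ℝ i (fun q : ℝ => (l.choose r : ℝ) * q ^ r) p‖ *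
        ‖iteratedFDeriv ℝ (j - i) (fun q : ℝ => (1 - q) ^ (l - r)) p‖ := by
    have := norm_iteratedFDeriv_mul_le (𝕜 := ℝ) (N := (⊤ : ℕ∞)) hf hg p
      (n := j) (by exact_mod_cast le_top)
    exact this
  have hfb : ∀ i : ℕ, ‖iteratedFDeriv ℝ i (fun q : ℝ => (l.choose r : ℝ) * q ^ r) p‖ ≤
      (l.choose r : ℝ) * ((l : ℝ) ^ i * 2 ^ r) := by
    intro i
    rw [norm_iteratedFDeriv_eq_norm_iteratedDeriv, Real.norm_eq_abs,
      iterDeriv_const_mul'' (contDiff_pow' r), abs_mul, abs_of_nonneg (by positivity :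
        (0:ℝ) ≤ (l.choose r : ℝ))]
    refine mul_le_mul_of_nonneg_left ?_ (by positivity)
    refine le_trans (abs_iterDeriv_pow_le i r hp2) ?_
    have : (r : ℝ) ^ i ≤ (l : ℝ) ^ i := pow_le_pow_left₀ (by positivity) (by exact_mod_cast hr) i
    nlinarith [pow_nonneg (by norm_num : (0:ℝ) ≤ 2) r]
  have hgb : ∀ i : ℕ, ‖iteratedFDeriv ℝ i (fun q : ℝ => (1 - q) ^ (l - r)) p‖ ≤
      (l : ℝ) ^ i * 2 ^ (l - r) := by
    intro i
    rw [norm_iteratedFDeriv_eq_norm_iteratedDeriv, Real.norm_eq_abs]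
    refine le_trans (abs_iterDeriv_one_sub_pow_le i (l - r) hq2) ?_
    have : ((l - r : ℕ) : ℝ) ^ i ≤ (l : ℝ) ^ i :=
      pow_le_pow_left₀ (by positivity) (by exact_mod_cast Nat.sub_le l r) i
    nlinarith [pow_nonneg (by norm_num : (0:ℝ) ≤ 2) (l - r)]
  have habs : |iteratedDeriv j (binomProb l r) p| = ‖iteratedFDeriv ℝ j (binomProb l r) p‖ := by
    rw [norm_iteratedFDeriv_eq_norm_iteratedDeriv, Real.norm_eq_abs]
  rw [habs]
  refine le_trans key ?_
  have hstep : ∀ i ∈ Finset.range (j + 1), (j.choose i : ℝ) *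
        ‖iteratedFDeriv ℝ i (fun q : ℝ => (l.choose r : ℝ) * q ^ r) p‖ *
        ‖iteratedFDeriv ℝ (j - i) (fun q : ℝ => (1 - q) ^ (l - r)) p‖ ≤
      (j.choose i : ℝ) * ((l.choose r : ℝ) * ((l : ℝ) ^ i * 2 ^ r)) *
        ((l : ℝ) ^ (j - i) * 2 ^ (l - r)) := by
    intro i _
    have h1 := hfb i
    have h2 := hgb (j - i)
    have hn1 : (0:ℝ) ≤ (j.choose i : ℝ) := by positivity
    exact mul_le_mul (mul_le_mul_of_nonneg_left h1 hn1) h2 (norm_nonneg _) (by positivity)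
  refine le_trans (Finset.sum_le_sum hstep) (le_of_eq ?_)
  have heq : ∀ i ∈ Finset.range (j + 1), (j.choose i : ℝ) *
        ((l.choose r : ℝ) * ((l : ℝ) ^ i * 2 ^ r)) * ((l : ℝ) ^ (j - i) * 2 ^ (l - r)) =
      (j.choose i : ℝ) * ((l.choose r : ℝ) * ((l : ℝ) ^ j * 2 ^ l)) := by
    intro i hi
    have hij : i ≤ j := Nat.lt_succ_iff.mp (Finset.mem_range.mp hi)
    have hl : (l : ℝ) ^ i * (l : ℝ) ^ (j - i) = (l : ℝ) ^ j := by
      rw [← pow_add, Nat.add_sub_cancel' hij]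
    have h2 : (2 : ℝ) ^ r * 2 ^ (l - r) = 2 ^ l := by
      rw [← pow_add, Nat.add_sub_cancel' hr]
    calc (j.choose i : ℝ) * ((l.choose r : ℝ) * ((l : ℝ) ^ i * 2 ^ r)) *
          ((l : ℝ) ^ (j - i) * 2 ^ (l - r))
        = (j.choose i : ℝ) * (l.choose r : ℝ) * (((l:ℝ) ^ i * (l:ℝ) ^ (j - i)) *
          ((2:ℝ) ^ r * 2 ^ (l - r))) := by ring
      _ = (j.choose i : ℝ) * ((l.choose r : ℝ) * ((l : ℝ) ^ j * 2 ^ l)) := by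
          rw [hl, h2]; ring
  rw [Finset.sum_congr rfl heq, ← Finset.sum_mul]
  have : (∑ i ∈ Finset.range (j + 1), (j.choose i : ℝ)) = 2 ^ j := by
    exact_mod_cast congrArg (Nat.cast : ℕ → ℝ) (Nat.sum_range_choose j)
  rw [this]
  rw [mul_pow]
  ring

lemma abs_iterDeriv_truncBinMean_le (j k l : ℕ) {p : ℝ} (hp : p ∈ Set.Icc (-1 : ℝ) 2) :
    |iteratedDeriv j (truncBinMean k l) p| ≤ 2 ^ j * (l : ℝ) ^ (j + 1) * 4 ^ l := by
  have hsum : iteratedFDeriv ℝ j (truncBinMean k l) p =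
      ∑ r ∈ Finset.Icc k l, iteratedFDeriv ℝ j (fun q : ℝ => (r : ℝ) * binomProb l r q) p := by
    have h := iteratedFDeriv_sum (𝕜 := ℝ)
      (f := fun (r : ℕ) (q : ℝ) => (r : ℝ) * binomProb l r q) (u := Finset.Icc k l) (i := j)
      (fun r _ => (contDiff_const.mul (contDiff_binomProb l r)).of_le (by exact_mod_cast le_top))
    have h2 := congrFun h p
    rw [show truncBinMean k l = fun x => ∑ r ∈ Finset.Icc k l, (r : ℝ) * binomProb l r x from rfl]
    simpa using h2
  have habs : |iteratedDeriv j (truncBinMean k l) p| =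
      ‖iteratedFDeriv ℝ j (truncBinMean k l) p‖ := by
    rw [norm_iteratedFDeriv_eq_norm_iteratedDeriv, Real.norm_eq_abs]
  rw [habs, hsum]
  refine le_trans (norm_sum_le _ _) ?_
  have hterm : ∀ r ∈ Finset.Icc k l,
      ‖iteratedFDeriv ℝ j (fun q : ℝ => (r : ℝ) * binomProb l r q) p‖ ≤
      (r : ℝ) * (l.choose r : ℝ) * ((2 * l : ℝ) ^ j * 2 ^ l) := by
    intro r hr
    have hrl : r ≤ l := (Finset.mem_Icc.mp hr).2
    rw [norm_iteratedFDeriv_eq_norm_iteratedDeriv, Real.norm_eq_abs,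
      iterDeriv_const_mul'' (contDiff_binomProb l r), abs_mul,
      abs_of_nonneg (by positivity : (0:ℝ) ≤ (r:ℝ))]
    rw [mul_assoc]
    exact mul_le_mul_of_nonneg_left (abs_iterDeriv_binomProb_le j l r hrl hp) (by positivity)
  refine le_trans (Finset.sum_le_sum hterm) ?_
  rw [← Finset.sum_mul]
  have hcoef : (∑ r ∈ Finset.Icc k l, (r : ℝ) * (l.choose r : ℝ)) ≤ (l : ℝ) * 2 ^ l := by
    have h1 : (∑ r ∈ Finset.Icc k l, (r : ℝ) * (l.choose r : ℝ)) ≤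
        ∑ r ∈ Finset.Icc k l, (l : ℝ) * (l.choose r : ℝ) := by
      refine Finset.sum_le_sum fun r hr => ?_
      have : (r : ℝ) ≤ (l : ℝ) := by exact_mod_cast (Finset.mem_Icc.mp hr).2
      exact mul_le_mul_of_nonneg_right this (by positivity)
    refine le_trans h1 ?_
    rw [← Finset.mul_sum]
    refine mul_le_mul_of_nonneg_left ?_ (by positivity)
    have hsub : Finset.Icc k l ⊆ Finset.range (l + 1) := by
      intro r hr
      exact Finset.mem_range.mpr (Nat.lt_succ_of_le (Finset.mem_Icc.mp hr).2)
    have h2 : (∑ r ∈ Finset.Icc k l, (l.choose r : ℝ)) ≤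
        ∑ r ∈ Finset.range (l + 1), (l.choose r : ℝ) :=
      Finset.sum_le_sum_of_subset_of_nonneg hsub (fun _ _ _ => by positivity)
    refine le_trans h2 (le_of_eq ?_)
    exact_mod_cast congrArg (Nat.cast : ℕ → ℝ) (Nat.sum_range_choose l)
  have hpos : (0:ℝ) ≤ (2 * l : ℝ) ^ j * 2 ^ l := by positivity
  refine le_trans (mul_le_mul_of_nonneg_right hcoef hpos) (le_of_eq ?_)
  rw [mul_pow]
  have : (4:ℝ) ^ l = 2 ^ l * 2 ^ l := by
    rw [← mul_pow]; norm_num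
  rw [this]
  ring

lemma exists_M (j k : ℕ) : ∃ M : ℝ, 0 ≤ M ∧ ∀ l : ℕ, ∀ p ∈ Set.Icc (-1 : ℝ) 2,
    |iteratedDeriv j (truncBinMean k l) p| ≤ M * 5 ^ l := by
  have hsummable : Summable (fun l : ℕ => (l : ℝ) ^ (j + 1) * (4 / 5 : ℝ) ^ l) :=
    summable_pow_mul_geometric_of_norm_lt_one (j + 1) (by rw [Real.norm_eq_abs, abs_of_nonneg]; norm_num; norm_num)
  set C0 : ℝ := ∑' l : ℕ, (l : ℝ) ^ (j + 1) * (4 / 5 : ℝ) ^ l with hC0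
  have hC0nn : 0 ≤ C0 := tsum_nonneg fun l => by positivity
  refine ⟨2 ^ j * C0, by positivity, fun l p hp => ?_⟩
  refine le_trans (abs_iterDeriv_truncBinMean_le j k l hp) ?_
  have hle : (l : ℝ) ^ (j + 1) * (4 / 5 : ℝ) ^ l ≤ C0 :=
    Summable.le_tsum hsummable l fun m _ => by positivity
  have h4 : (4 : ℝ) ^ l = (4 / 5 : ℝ) ^ l * 5 ^ l := by
    rw [← mul_pow]; norm_num
  rw [h4]
  calc 2 ^ j * (l : ℝ) ^ (j + 1) * ((4 / 5 : ℝ) ^ l * 5 ^ l)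
      = ((l : ℝ) ^ (j + 1) * (4 / 5 : ℝ) ^ l) * (2 ^ j * 5 ^ l) := by ring
    _ ≤ C0 * (2 ^ j * 5 ^ l) := mul_le_mul_of_nonneg_right hle (by positivity)
    _ = 2 ^ j * C0 * 5 ^ l := by ring

lemma summable_aux {v : ℕ → ℝ} (hv0 : ∀ l, 0 ≤ v l)
    (hv5 : Summable fun l => v l * (5 : ℝ) ^ l) (k j : ℕ) {p : ℝ}
    (hp : p ∈ Set.Icc (-1 : ℝ) 2) :
    Summable fun l => v l * iteratedDeriv j (truncBinMean k l) p := by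
  obtain ⟨M, hM, hbd⟩ := exists_M j k
  refine Summable.of_norm_bounded (g := fun l => M * (v l * 5 ^ l)) (hv5.mul_left M) fun l => ?_
  rw [Real.norm_eq_abs, abs_mul, abs_of_nonneg (hv0 l)]
  calc v l * |iteratedDeriv j (truncBinMean k l) p| ≤ v l * (M * 5 ^ l) :=
        mul_le_mul_of_nonneg_left (hbd l p hp) (hv0 l)
    _ = M * (v l * 5 ^ l) := by ring

lemma hasDerivAt_G {v : ℕ → ℝ} (hv0 : ∀ l, 0 ≤ v l)
    (hv5 : Summable fun l => v l * (5 : ℝ) ^ l) (k j : ℕ) {p : ℝ}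
    (hp : p ∈ Set.Ioo (-1 : ℝ) 2) :
    HasDerivAt (fun q => ∑' l : ℕ, v l * iteratedDeriv j (truncBinMean k l) q)
      (∑' l : ℕ, v l * iteratedDeriv (j + 1) (truncBinMean k l) p) p := by
  obtain ⟨M, hM, hbd⟩ := exists_M (j + 1) k
  have h1 : TendstoUniformlyOn
      (fun (N : ℕ) q => ∑ l ∈ Finset.range N, v l * iteratedDeriv (j + 1) (truncBinMean k l) q)
      (fun q => ∑' l : ℕ, v l * iteratedDeriv (j + 1) (truncBinMean k l) q) atTop
      (Set.Ioo (-1 : ℝ) 2) := by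
    refine tendstoUniformlyOn_tsum_nat (hv5.mul_left M) fun l q hq => ?_
    have hqI : q ∈ Set.Icc (-1 : ℝ) 2 := Set.Ioo_subset_Icc_self hq
    rw [Real.norm_eq_abs, abs_mul, abs_of_nonneg (hv0 l)]
    calc v l * |iteratedDeriv (j + 1) (truncBinMean k l) q| ≤ v l * (M * 5 ^ l) :=
          mul_le_mul_of_nonneg_left (hbd l q hqI) (hv0 l)
      _ = M * (v l * 5 ^ l) := by ring
  have h2 : ∀ (N : ℕ), ∀ q ∈ Set.Ioo (-1 : ℝ) 2,
      HasDerivAt (fun q => ∑ l ∈ Finset.range N, v l * iteratedDeriv j (truncBinMean k l) q)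
        (∑ l ∈ Finset.range N, v l * iteratedDeriv (j + 1) (truncBinMean k l) q) q := by
    intro N q _
    refine HasDerivAt.fun_sum fun l _ => ?_
    have hdiff : DifferentiableAt ℝ (iteratedDeriv j (truncBinMean k l)) q := by
      have hcd : ContDiff ℝ ((j : ℕ∞) + 1) (truncBinMean k l) :=
        (contDiff_truncBinMean k l).of_le (by exact_mod_cast le_top)
      exact (hcd.differentiable_iteratedDeriv j
        (by exact_mod_cast Nat.lt_succ_self j)).differentiableAt
    have hda : HasDerivAt (iteratedDeriv j (truncBinMean k l))
        (iteratedDeriv (j + 1) (truncBinMean k l) q) q := by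
      rw [iteratedDeriv_succ]
      exact hdiff.hasDerivAt
    exact hda.const_mul (v l)
  have h3 : ∀ q ∈ Set.Ioo (-1 : ℝ) 2,
      Tendsto (fun N : ℕ => ∑ l ∈ Finset.range N, v l * iteratedDeriv j (truncBinMean k l) q)
        atTop (𝓝 (∑' l : ℕ, v l * iteratedDeriv j (truncBinMean k l) q)) := fun q hq =>
    (summable_aux hv0 hv5 k j (Set.Ioo_subset_Icc_self hq)).hasSum.tendsto_sum_nat
  exact hasDerivAt_of_tendstoUniformlyOn isOpen_Ioo h1
    (Eventually.of_forall h2) h3 hp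

lemma eqOn_iterDeriv_hFun {v : ℕ → ℝ} (hv0 : ∀ l, 0 ≤ v l)
    (hv5 : Summable fun l => v l * (5 : ℝ) ^ l) (k j : ℕ) :
    Set.EqOn (iteratedDeriv j (hFun k v))
      (fun p => ∑' l : ℕ, v l * iteratedDeriv j (truncBinMean k l) p)
      (Set.Ioo (-1 : ℝ) 2) := by
  induction j with
  | zero => intro p _; simp [hFun]
  | succ j IH =>
    intro p hp
    rw [iteratedDeriv_succ]
    have h1 : deriv (iteratedDeriv j (hFun k v)) p =
        deriv (fun q => ∑' l : ℕ, v l * iteratedDeriv j (truncBinMean k l) q) p :=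
      Filter.EventuallyEq.deriv_eq (IH.eventuallyEq_of_mem (isOpen_Ioo.mem_nhds hp))
    rw [h1, (hasDerivAt_G hv0 hv5 k j hp).deriv]

lemma limit_moment {w : ℕ → ℕ → ℝ} {wLim : ℕ → ℝ} (hw0 : ∀ n l, 0 ≤ w n l)
    (hwLim0 : ∀ l, 0 ≤ wLim l)
    (hdist : ∀ l : ℕ, Tendsto (fun n => w n l) atTop (𝓝 (wLim l)))
    {A C : ℝ} (hA : 0 < A) (hsum : ∀ n, Summable fun l => w n l * A ^ l)
    (hC : ∀ n, (∑' l : ℕ, w n l * A ^ l) ≤ C) :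
    Summable (fun l => wLim l * A ^ l) ∧ (∑' l : ℕ, wLim l * A ^ l) ≤ C := by
  have key : ∀ m : ℕ, (∑ l ∈ Finset.range m, wLim l * A ^ l) ≤ C := by
    intro m
    have ht : Tendsto (fun n => ∑ l ∈ Finset.range m, w n l * A ^ l) atTop
        (𝓝 (∑ l ∈ Finset.range m, wLim l * A ^ l)) :=
      tendsto_finset_sum _ fun l _ => (hdist l).mul_const _
    refine le_of_tendsto ht (Eventually.of_forall fun n => ?_)
    refine le_trans (Summable.sum_le_tsum _ (fun l _ => mul_nonneg (hw0 n l) (by positivity)) (hsum n))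
      (hC n)
  exact ⟨summable_of_sum_range_le (fun l => mul_nonneg (hwLim0 l) (by positivity)) key,
    Real.tsum_le_of_sum_range_le (fun l => mul_nonneg (hwLim0 l) (by positivity)) key⟩

lemma tail_bound {v : ℕ → ℝ} (hv0 : ∀ l, 0 ≤ v l)
    (hv6 : Summable fun l => v l * (6 : ℝ) ^ l) {C6 : ℝ}
    (hC6 : (∑' l : ℕ, v l * (6 : ℝ) ^ l) ≤ C6) (m : ℕ) :
    (∑' l : ℕ, v (l + m) * (5 : ℝ) ^ (l + m)) ≤ (5 / 6 : ℝ) ^ m * C6 := by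
  have hs6 : Summable (fun l => v (l + m) * (6 : ℝ) ^ (l + m)) :=
    (summable_nat_add_iff (f := fun l => v l * (6:ℝ) ^ l) m).mpr hv6
  have hterm : ∀ l, v (l + m) * (5 : ℝ) ^ (l + m) ≤
      (5 / 6 : ℝ) ^ m * (v (l + m) * 6 ^ (l + m)) := by
    intro l
    have h56 : (5 : ℝ) ^ (l + m) ≤ (5 / 6) ^ m * 6 ^ (l + m) := by
      have he : (5 : ℝ) ^ (l + m) = (5 / 6) ^ (l + m) * 6 ^ (l + m) := by
        rw [← mul_pow]; norm_num
      rw [he]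
      exact mul_le_mul_of_nonneg_right
        (pow_le_pow_of_le_one (by norm_num) (by norm_num) (Nat.le_add_left m l)) (by positivity)
    calc v (l + m) * (5 : ℝ) ^ (l + m) ≤ v (l + m) * ((5 / 6) ^ m * 6 ^ (l + m)) :=
          mul_le_mul_of_nonneg_left h56 (hv0 _)
      _ = (5 / 6 : ℝ) ^ m * (v (l + m) * 6 ^ (l + m)) := by ring
  have hs5 : Summable (fun l => v (l + m) * (5 : ℝ) ^ (l + m)) :=
    Summable.of_nonneg_of_le (fun l => mul_nonneg (hv0 _) (by positivity)) hterm
      (hs6.mul_left _)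
  calc (∑' l : ℕ, v (l + m) * (5 : ℝ) ^ (l + m))
      ≤ ∑' l : ℕ, (5 / 6 : ℝ) ^ m * (v (l + m) * 6 ^ (l + m)) :=
        Summable.tsum_le_tsum hterm hs5 (hs6.mul_left _)
    _ = (5 / 6 : ℝ) ^ m * ∑' l : ℕ, v (l + m) * 6 ^ (l + m) := tsum_mul_left
    _ ≤ (5 / 6 : ℝ) ^ m * C6 := by
        refine mul_le_mul_of_nonneg_left ?_ (by positivity)
        have hsplit := Summable.sum_add_tsum_nat_add m hv6
        have hnn : (0 : ℝ) ≤ ∑ l ∈ Finset.range m, v l * 6 ^ l :=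
          Finset.sum_nonneg fun l _ => mul_nonneg (hv0 l) (by positivity)
        linarith

lemma main_unif (k j : ℕ) {w : ℕ → ℕ → ℝ} {wLim : ℕ → ℝ}
    (hw0 : ∀ n l, 0 ≤ w n l) (hwLim0 : ∀ l, 0 ≤ wLim l)
    (hdist : ∀ l : ℕ, Tendsto (fun n => w n l) atTop (𝓝 (wLim l)))
    {C6 : ℝ} (hmom6 : ∀ n, (Summable fun l : ℕ => w n l * (6:ℝ) ^ l) ∧
      (∑' l : ℕ, w n l * (6:ℝ) ^ l) ≤ C6) :
    TendstoUniformlyOn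
      (fun n p => ∑' l : ℕ, w n l * iteratedDeriv j (truncBinMean k l) p)
      (fun p => ∑' l : ℕ, wLim l * iteratedDeriv j (truncBinMean k l) p)
      atTop (Set.Icc (0:ℝ) 1) := by
  obtain ⟨M, hM, hbd⟩ := exists_M j k
  have hlim6 : Summable (fun l => wLim l * (6:ℝ) ^ l) ∧ (∑' l : ℕ, wLim l * (6:ℝ) ^ l) ≤ C6 :=
    limit_moment hw0 hwLim0 hdist (by norm_num) (fun n => (hmom6 n).1) (fun n => (hmom6 n).2)
  have h6to5 : ∀ v : ℕ → ℝ, (∀ l, 0 ≤ v l) → (Summable fun l => v l * (6:ℝ) ^ l) →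
      Summable fun l => v l * (5:ℝ) ^ l := by
    intro v hv0 hv6
    refine Summable.of_nonneg_of_le (fun l => mul_nonneg (hv0 l) (by positivity))
      (fun l => mul_le_mul_of_nonneg_left (pow_le_pow_left₀ (by norm_num) (by norm_num) l)
        (hv0 l)) hv6
  have hlim5 : Summable fun l => wLim l * (5:ℝ) ^ l := h6to5 _ hwLim0 hlim6.1
  have hwn5 : ∀ n, Summable fun l => w n l * (5:ℝ) ^ l :=
    fun n => h6to5 _ (hw0 n) (hmom6 n).1
  have hC6nn : 0 ≤ C6 :=
    le_trans (tsum_nonneg fun l => mul_nonneg (hw0 0 l) (by positivity)) (hmom6 0).2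
  rw [Metric.tendstoUniformlyOn_iff]
  intro ε hε
  -- choose the cutoff m
  obtain ⟨m, hm⟩ : ∃ m : ℕ, M * ((5/6 : ℝ) ^ m * C6) < ε / 4 := by
    have ht : Tendsto (fun m : ℕ => M * ((5/6 : ℝ) ^ m * C6)) atTop (𝓝 0) := by
      have := tendsto_pow_atTop_nhds_zero_of_lt_one (by norm_num : (0:ℝ) ≤ 5/6)
        (by norm_num : (5/6:ℝ) < 1)
      have h2 := (this.mul_const C6).const_mul M
      simpa using h2
    exact (ht.eventually (gt_mem_nhds (by positivity : (0:ℝ) < ε / 4))).exists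
  -- head convergence
  have hhead : Tendsto (fun n => ∑ l ∈ Finset.range m, |w n l - wLim l| * (M * 5 ^ l))
      atTop (𝓝 0) := by
    have hl : ∀ l : ℕ, Tendsto (fun n => |w n l - wLim l| * (M * 5 ^ l)) atTop (𝓝 0) := by
      intro l
      have h0 : Tendsto (fun n => w n l - wLim l) atTop (𝓝 0) := by
        simpa using (hdist l).sub_const (wLim l)
      have h1 : Tendsto (fun n => |w n l - wLim l|) atTop (𝓝 0) := by
        simpa using h0.abs
      simpa using h1.mul_const (M * 5 ^ l)
    have := tendsto_finset_sum (Finset.range m) fun l _ => hl l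
    simpa using this
  filter_upwards [hhead.eventually (gt_mem_nhds (by positivity : (0:ℝ) < ε / 4))] with n hn
  intro p hp
  have hpI : p ∈ Set.Icc (-1:ℝ) 2 := ⟨by linarith [hp.1], by linarith [hp.2]⟩
  set F : ℕ → ℝ := fun l => iteratedDeriv j (truncBinMean k l) p with hF
  have hFb : ∀ l, |F l| ≤ M * 5 ^ l := fun l => hbd l p hpI
  have hsummand : ∀ (v : ℕ → ℝ), (∀ l, 0 ≤ v l) → (Summable fun l => v l * (5:ℝ) ^ l) →
      Summable (fun l => v l * F l) := by
    intro v hv0 hv5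
    refine Summable.of_norm_bounded (g := fun l => M * (v l * 5 ^ l)) (hv5.mul_left M) fun l => ?_
    rw [Real.norm_eq_abs, abs_mul, abs_of_nonneg (hv0 l)]
    calc v l * |F l| ≤ v l * (M * 5 ^ l) := mul_le_mul_of_nonneg_left (hFb l) (hv0 l)
      _ = M * (v l * 5 ^ l) := by ring
  have hsLim : Summable fun l => wLim l * F l := hsummand _ hwLim0 hlim5
  have hsn : Summable fun l => w n l * F l := hsummand _ (hw0 n) (hwn5 n)
  -- tail estimate
  have htail : ∀ (v : ℕ → ℝ), (∀ l, 0 ≤ v l) → (Summable fun l => v l * (5:ℝ) ^ l) →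
      (Summable fun l => v l * (6:ℝ) ^ l) → (∑' l : ℕ, v l * (6:ℝ) ^ l) ≤ C6 →
      |∑' l : ℕ, v (l + m) * F (l + m)| ≤ M * ((5/6 : ℝ) ^ m * C6) := by
    intro v hv0 hv5 hv6 hvC
    have hs5m : Summable (fun l => v (l + m) * (5:ℝ) ^ (l + m)) :=
      (summable_nat_add_iff (f := fun l => v l * (5:ℝ) ^ l) m).mpr hv5
    have hsFm : Summable (fun l => v (l + m) * F (l + m)) :=
      (summable_nat_add_iff (f := fun l => v l * F l) m).mpr (hsummand v hv0 hv5)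
    have h1 : |∑' l : ℕ, v (l + m) * F (l + m)| ≤ ∑' l : ℕ, |v (l + m) * F (l + m)| := by
      simpa only [Real.norm_eq_abs] using
        norm_tsum_le_tsum_norm (f := fun l => v (l + m) * F (l + m))
          (by simpa only [Real.norm_eq_abs] using hsFm.abs)
    have h2 : (∑' l : ℕ, |v (l + m) * F (l + m)|) ≤ ∑' l : ℕ, M * (v (l + m) * 5 ^ (l + m)) := by
      refine Summable.tsum_le_tsum (fun l => ?_) hsFm.abs (hs5m.mul_left M)
      rw [abs_mul, abs_of_nonneg (hv0 _)]
      calc v (l + m) * |F (l + m)| ≤ v (l + m) * (M * 5 ^ (l + m)) :=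
            mul_le_mul_of_nonneg_left (hFb _) (hv0 _)
        _ = M * (v (l + m) * 5 ^ (l + m)) := by ring
    have h3 : (∑' l : ℕ, M * (v (l + m) * 5 ^ (l + m)))
        = M * ∑' l : ℕ, v (l + m) * 5 ^ (l + m) := tsum_mul_left
    refine le_trans h1 (le_trans h2 ?_)
    rw [h3]
    exact mul_le_mul_of_nonneg_left (tail_bound hv0 hv6 hvC m) hM
  -- decompose
  have hdecLim := (Summable.sum_add_tsum_nat_add m hsLim).symm
  have hdecn := (Summable.sum_add_tsum_nat_add m hsn).symm
  rw [Real.dist_eq]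
  have hheadbd : |∑ l ∈ Finset.range m, wLim l * F l - ∑ l ∈ Finset.range m, w n l * F l|
      ≤ ∑ l ∈ Finset.range m, |w n l - wLim l| * (M * 5 ^ l) := by
    rw [← Finset.sum_sub_distrib]
    refine le_trans (Finset.abs_sum_le_sum_abs _ _) (Finset.sum_le_sum fun l _ => ?_)
    rw [← sub_mul, abs_mul, abs_sub_comm]
    exact mul_le_mul_of_nonneg_left (hFb l) (abs_nonneg _)
  have htLim := htail wLim hwLim0 hlim5 hlim6.1 hlim6.2
  have htn := htail (w n) (hw0 n) (hwn5 n) (hmom6 n).1 (hmom6 n).2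
  calc |(∑' l : ℕ, wLim l * F l) - ∑' l : ℕ, w n l * F l|
      = |(∑ l ∈ Finset.range m, wLim l * F l - ∑ l ∈ Finset.range m, w n l * F l)
          + ((∑' l : ℕ, wLim (l + m) * F (l + m)) - ∑' l : ℕ, w n (l + m) * F (l + m))| := by
        rw [hdecLim, hdecn]; congr 1; ring
    _ ≤ |∑ l ∈ Finset.range m, wLim l * F l - ∑ l ∈ Finset.range m, w n l * F l|
        + (|∑' l : ℕ, wLim (l + m) * F (l + m)| + |∑' l : ℕ, w n (l + m) * F (l + m)|) :=
        le_trans (abs_add_le _ _) (by gcongr; exact abs_sub _ _)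
    _ < ε / 4 + (ε / 4 + ε / 4) := by
        have := lt_of_le_of_lt hheadbd hn
        have h1 := lt_of_le_of_lt htLim hm
        have h2 := lt_of_le_of_lt htn hm
        gcongr
    _ < ε := by linarith

theorem hFun_uniform_convergence (k : ℕ) (hk : 2 ≤ k)
    (w : ℕ → ℕ → ℝ) (wLim : ℕ → ℝ)
    (hw0 : ∀ n l, 0 ≤ w n l) (hw1 : ∀ n, ∑' l, w n l = 1)
    (hwLim0 : ∀ l, 0 ≤ wLim l) (hwLim1 : ∑' l, wLim l = 1)
    (hdist : ∀ l : ℕ, Tendsto (fun n => w n l) atTop (𝓝 (wLim l)))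
    (hmom : ∀ A : ℝ, 1 < A → ∃ C : ℝ, ∀ n,
      (Summable fun l : ℕ => w n l * A ^ l) ∧ (∑' l : ℕ, w n l * A ^ l) ≤ C) :
    TendstoUniformlyOn (fun n => hFun k (w n)) (hFun k wLim) atTop (Set.Icc 0 1) ∧
    ∀ j : ℕ, 1 ≤ j →
      TendstoUniformlyOn (fun n => iteratedDeriv j (hFun k (w n)))
        (iteratedDeriv j (hFun k wLim)) atTop (Set.Icc 0 1) := by
  obtain ⟨C6, hmom6⟩ := hmom 6 (by norm_num)
  have hlim6 : (Summable fun l => wLim l * (6:ℝ) ^ l) ∧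
      (∑' l : ℕ, wLim l * (6:ℝ) ^ l) ≤ C6 :=
    limit_moment hw0 hwLim0 hdist (by norm_num) (fun n => (hmom6 n).1) (fun n => (hmom6 n).2)
  have h6to5 : ∀ v : ℕ → ℝ, (∀ l, 0 ≤ v l) → (Summable fun l => v l * (6:ℝ) ^ l) →
      Summable fun l => v l * (5:ℝ) ^ l := by
    intro v hv0 hv6
    exact Summable.of_nonneg_of_le (fun l => mul_nonneg (hv0 l) (by positivity))
      (fun l => mul_le_mul_of_nonneg_left (pow_le_pow_left₀ (by norm_num) (by norm_num) l)
        (hv0 l)) hv6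
  have hlim5 : Summable fun l => wLim l * (5:ℝ) ^ l := h6to5 _ hwLim0 hlim6.1
  have hwn5 : ∀ n, Summable fun l => w n l * (5:ℝ) ^ l :=
    fun n => h6to5 _ (hw0 n) (hmom6 n).1
  have hIccsub : Set.Icc (0:ℝ) 1 ⊆ Set.Ioo (-1:ℝ) 2 := fun p hp =>
    ⟨by linarith [hp.1], by linarith [hp.2]⟩
  constructor
  · have h := main_unif k 0 hw0 hwLim0 hdist hmom6
    simp only [iteratedDeriv_zero] at h
    exact h
  · intro j hj
    have h := main_unif k j hw0 hwLim0 hdist hmom6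
    have hEq : ∀ (v : ℕ → ℝ), (∀ l, 0 ≤ v l) → (Summable fun l => v l * (5:ℝ) ^ l) →
        Set.EqOn (fun p => ∑' l : ℕ, v l * iteratedDeriv j (truncBinMean k l) p)
          (iteratedDeriv j (hFun k v)) (Set.Icc (0:ℝ) 1) :=
      fun v hv0 hv5 p hp => ((eqOn_iterDeriv_hFun hv0 hv5 k j) (hIccsub hp)).symm
    exact (h.congr (Eventually.of_forall fun n => hEq (w n) (hw0 n) (hwn5 n))).congr_right
      (hEq wLim hwLim0 hlim5)
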